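/- Let (Ω, F, P) be a probability space, let q ≥ 1 be fixed, and let (p_n) be a sequence of integers with p_n ≥ q + 2 and p_n ≤ C₀·n^α for some constant C₀ and some 0 ≤ α < 1. For each n let M^{(n)} be a real symmetric positive semidefinite p_n×p_n matrix whose nonzero eigenvalues are exactly λ_1 ≥ λ_2 ≥ ... ≥ λ_q > 0 (the same for all n), and let M_n : Ω → (real symmetric p_n×p_n matrices) be measurable with ‖M_n − M^{(n)}‖_F = O_p((p_n/n)^{1/2}), i.e. for every ε > 0 there is C > 0 with P(‖M_n − M^{(n)}‖_F > C·(p_n/n)^{1/2}) ≤ ε for all n. Let λ̂_j(n) = λ_j(M_n), let c₁(n), c₂(n) > 0 with c₁(n) → 0, c₂(n) → 0 and n·c₁(n)·c₂(n)/p_n → ∞, and fix τ ∈ (0, 1). Define ŝ_j(n) = λ̂_j(n)/(1 + λ̂_j(n)), ŝ*_j(n) = (ŝ_j(n)² + c₁(n))/(ŝ_{j+1}(n)² + c₁(n)) − 1, r_j(n) = (ŝ*_{j+1}(n) + c₂(n))/(ŝ*_j(n) + c₂(n)), and S_n = {j ∈ {1, ..., p_n − 2} : r_j(n) ≤ τ}.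 Then P(S_n is nonempty and max S_n = q) → 1 as n → ∞. -/

import Mathlib

open Filter MeasureTheory
open scoped Classical ENNReal

/-- The `i`-th largest eigenvalue (1-based, counted with multiplicity) of a real
symmetric `k × k` matrix; junk value `0` if `A` is not symmetric or `i` is out of range. -/
noncomputable def eigDesc {k : ℕ} (A : Matrix (Fin k) (Fin k) ℝ) (i : ℕ) : ℝ :=
  if h : A.IsHermitian ∧ i - 1 < k then
    h.1.eigenvalues (Tuple.sort h.1.eigenvalues (Fin.rev ⟨i - 1, h.2⟩))
  else 0

/-- The Frobenius norm of a real matrix. -/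
noncomputable def frobNorm {m n : ℕ} (C : Matrix (Fin m) (Fin n) ℝ) : ℝ :=
  Real.sqrt (∑ i, ∑ j, (C i j) ^ 2)

/-- `ŝ_j = λ̂_j / (1 + λ̂_j)`. -/
noncomputable def sHat (lam : ℕ → ℝ) (j : ℕ) : ℝ := lam j / (1 + lam j)

/-- First-round ridge ratio `ŝ*_j = (ŝ_j² + c₁)/(ŝ_{j+1}² + c₁) − 1`. -/
noncomputable def sStar (lam : ℕ → ℝ) (c1 : ℝ) (j : ℕ) : ℝ :=
  ((sHat lam j) ^ 2 + c1) / ((sHat lam (j + 1)) ^ 2 + c1) - 1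

/-- Second-round ridge ratio `r_j = (ŝ*_{j+1} + c₂)/(ŝ*_j + c₂)`. -/
noncomputable def rRatio (lam : ℕ → ℝ) (c1 c2 : ℝ) (j : ℕ) : ℝ :=
  (sStar lam c1 (j + 1) + c2) / (sStar lam c1 j + c2)

open Matrix Finset

section quad
variable {k : ℕ}

lemma dot_eq_inner (x y : EuclideanSpace ℝ (Fin k)) :
    (x : Fin k → ℝ) ⬝ᵥ (y : Fin k → ℝ) = (inner ℝ x y : ℝ) := by
  simp [PiLp.inner_apply, RCLike.inner_apply, dotProduct, mul_comm]

lemma repr_combo (b : OrthonormalBasis (Fin k) ℝ (EuclideanSpace ℝ (Fin k)))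
    (c : Fin k → ℝ) (t : Fin k) :
    b.repr (∑ s, c s • b s) t = c t := by
  rw [OrthonormalBasis.repr_apply_apply]
  exact b.orthonormal.inner_right_fintype c t

lemma combo_dot_self (b : OrthonormalBasis (Fin k) ℝ (EuclideanSpace ℝ (Fin k)))
    (c : Fin k → ℝ) :
    ((∑ s, c s • b s : EuclideanSpace ℝ (Fin k)) : Fin k → ℝ) ⬝ᵥ
      ((∑ s, c s • b s : EuclideanSpace ℝ (Fin k)) : Fin k → ℝ) = ∑ s, (c s)^2 := by
  rw [dot_eq_inner]
  rw [b.orthonormal.inner_sum c c]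
  simp [sq]

lemma mulVec_combo {A : Matrix (Fin k) (Fin k) ℝ} (hA : A.IsHermitian)
    (c : Fin k → ℝ) :
    A *ᵥ ((∑ s, c s • hA.eigenvectorBasis s : EuclideanSpace ℝ (Fin k)) : Fin k → ℝ)
      = ∑ s, (hA.eigenvalues s * c s) • (hA.eigenvectorBasis s : EuclideanSpace ℝ (Fin k)) := by
  have h0 : ((∑ s, c s • hA.eigenvectorBasis s : EuclideanSpace ℝ (Fin k)) : Fin k → ℝ)
      = ∑ s, c s • ((hA.eigenvectorBasis s : EuclideanSpace ℝ (Fin k)) : Fin k → ℝ) := by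
    simp only [WithLp.ofLp_sum, WithLp.ofLp_smul]
  rw [h0]
  have h1 : A *ᵥ (∑ s, c s • ((hA.eigenvectorBasis s : EuclideanSpace ℝ (Fin k)) : Fin k → ℝ))
      = ∑ s, c s • (A *ᵥ ((hA.eigenvectorBasis s : EuclideanSpace ℝ (Fin k)) : Fin k → ℝ)) := by
    show A.mulVecLin _ = _
    rw [map_sum]
    refine Finset.sum_congr rfl fun s _ => ?_
    rw [_root_.map_smul]
    rfl
  rw [h1]
  simp only [WithLp.ofLp_sum, WithLp.ofLp_smul]
  refine Finset.sum_congr rfl fun s _ => ?_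
  rw [show (A *ᵥ ((hA.eigenvectorBasis s : EuclideanSpace ℝ (Fin k)) : Fin k → ℝ))
      = hA.eigenvalues s • ((hA.eigenvectorBasis s : EuclideanSpace ℝ (Fin k)) : Fin k → ℝ)
      from hA.mulVec_eigenvectorBasis s]
  rw [smul_smul, mul_comm]

lemma quad_combo {A : Matrix (Fin k) (Fin k) ℝ} (hA : A.IsHermitian)
    (c : Fin k → ℝ) :
    ((∑ s, c s • hA.eigenvectorBasis s : EuclideanSpace ℝ (Fin k)) : Fin k → ℝ) ⬝ᵥ
      (A *ᵥ ((∑ s, c s • hA.eigenvectorBasis s : EuclideanSpace ℝ (Fin k)) : Fin k → ℝ))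
      = ∑ s, hA.eigenvalues s * (c s)^2 := by
  rw [mulVec_combo hA c]
  rw [dot_eq_inner]
  rw [hA.eigenvectorBasis.orthonormal.inner_sum c (fun s => hA.eigenvalues s * c s) Finset.univ]
  simp only [starRingEnd_apply, star_trivial]
  refine Finset.sum_congr rfl fun s _ => ?_
  ring

end quad

section weyl
variable {k : ℕ}
open Finset

lemma frobNorm_nonneg {m n : ℕ} (C : Matrix (Fin m) (Fin n) ℝ) : 0 ≤ frobNorm C :=
  Real.sqrt_nonneg _

lemma frobNorm_sub_comm {m n : ℕ} (A B : Matrix (Fin m) (Fin n) ℝ) :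
    frobNorm (A - B) = frobNorm (B - A) := by
  unfold frobNorm
  congr 1
  refine Finset.sum_congr rfl fun i _ => Finset.sum_congr rfl fun j _ => ?_
  simp only [Matrix.sub_apply]
  ring

lemma quadE_le (E : Matrix (Fin k) (Fin k) ℝ) (x : Fin k → ℝ) :
    x ⬝ᵥ (E *ᵥ x) ≤ frobNorm E * (x ⬝ᵥ x) := by
  have hN : x ⬝ᵥ x = ∑ j, (x j)^2 := by simp [dotProduct, sq]
  have hxx : (0:ℝ) ≤ ∑ j, (x j)^2 := Finset.sum_nonneg fun j _ => sq_nonneg _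
  have hF2 : (0:ℝ) ≤ ∑ i, ∑ j, (E i j)^2 :=
    Finset.sum_nonneg fun i _ => Finset.sum_nonneg fun j _ => sq_nonneg _
  have key : (x ⬝ᵥ (E *ᵥ x))^2 ≤ (∑ i, (x i)^2) * (∑ i, ((E *ᵥ x) i)^2) := by
    have := Finset.sum_mul_sq_le_sq_mul_sq Finset.univ x (E *ᵥ x)
    simpa [dotProduct] using this
  have h2 : ∑ i, ((E *ᵥ x) i)^2 ≤ (∑ i, ∑ j, (E i j)^2) * ∑ j, (x j)^2 := by
    rw [Finset.sum_mul]
    refine Finset.sum_le_sum fun i _ => ?_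
    have := Finset.sum_mul_sq_le_sq_mul_sq Finset.univ (fun j => E i j) x
    simpa [Matrix.mulVec, dotProduct] using this
  have key2 : (x ⬝ᵥ (E *ᵥ x))^2 ≤ (frobNorm E * (x ⬝ᵥ x))^2 := by
    have hb : (frobNorm E * (x ⬝ᵥ x))^2
        = (∑ i, ∑ j, (E i j)^2) * ((x ⬝ᵥ x) * (x ⬝ᵥ x)) := by
      rw [mul_pow, frobNorm, Real.sq_sqrt hF2]
      ring
    rw [hb, hN]
    calc (x ⬝ᵥ (E *ᵥ x))^2 ≤ (∑ i, (x i)^2) * (∑ i, ((E *ᵥ x) i)^2) := key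
      _ ≤ (∑ i, (x i)^2) * ((∑ i, ∑ j, (E i j)^2) * ∑ j, (x j)^2) :=
          mul_le_mul_of_nonneg_left h2 hxx
      _ = (∑ i, ∑ j, (E i j)^2) * ((∑ j, (x j)^2) * (∑ j, (x j)^2)) := by ring
  calc x ⬝ᵥ (E *ᵥ x) ≤ |x ⬝ᵥ (E *ᵥ x)| := le_abs_self _
    _ = Real.sqrt ((x ⬝ᵥ (E *ᵥ x))^2) := (Real.sqrt_sq_eq_abs _).symm
    _ ≤ Real.sqrt ((frobNorm E * (x ⬝ᵥ x))^2) := Real.sqrt_le_sqrt key2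
    _ = |frobNorm E * (x ⬝ᵥ x)| := Real.sqrt_sq_eq_abs _
    _ = frobNorm E * (x ⬝ᵥ x) := abs_of_nonneg (by
        rw [hN]; exact mul_nonneg (frobNorm_nonneg E) hxx)

noncomputable def extMap (S : Finset (Fin k)) : (↥S → ℝ) →ₗ[ℝ] (Fin k → ℝ) where
  toFun c t := if h : t ∈ S then c ⟨t, h⟩ else 0
  map_add' c d := by funext t; by_cases h : t ∈ S <;> simp [h]
  map_smul' a c := by funext t; by_cases h : t ∈ S <;> simp [h]

theorem weyl_sorted (A B : Matrix (Fin k) (Fin k) ℝ) (hA : A.IsHermitian)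
    (hB : B.IsHermitian) (u : Fin k) :
    hB.eigenvalues (Tuple.sort hB.eigenvalues u)
      ≤ hA.eigenvalues (Tuple.sort hA.eigenvalues u) + frobNorm (B - A) := by
  classical
  set bA := hA.eigenvectorBasis with hbA
  set bB := hB.eigenvectorBasis with hbB
  set μA := hA.eigenvalues with hμA
  set μB := hB.eigenvalues with hμB
  set σA := Tuple.sort hA.eigenvalues with hσA
  set σB := Tuple.sort hB.eigenvalues with hσB
  set gA := μA (σA u) with hgAdef
  set gB := μB (σB u) with hgBdef
  set S₁ : Finset (Fin k) := (Finset.Ici u).image σB with hS₁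
  set S₂ : Finset (Fin k) := (Finset.Iic u).image σA with hS₂
  have hcardS₁ : S₁.card = k - u.val := by
    rw [hS₁, Finset.card_image_of_injective _ σB.injective, Fin.card_Ici]
  have hcardS₂ : S₂.card = u.val + 1 := by
    rw [hS₂, Finset.card_image_of_injective _ σA.injective, Fin.card_Iic]
  let xOf : (↥S₁ → ℝ) → EuclideanSpace ℝ (Fin k) :=
    fun c => ∑ t, extMap S₁ c t • bB t
  have xOf_add : ∀ c d, xOf (c + d) = xOf c + xOf d := by
    intro c d
    simp only [xOf, map_add]
    rw [← Finset.sum_add_distrib]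
    refine Finset.sum_congr rfl fun t _ => ?_
    simp [add_smul]
  have xOf_smul : ∀ (a : ℝ) c, xOf (a • c) = a • xOf c := by
    intro a c
    simp only [xOf, _root_.map_smul]
    rw [Finset.smul_sum]
    refine Finset.sum_congr rfl fun t _ => ?_
    simp [smul_smul]
  let ψ : (↥S₁ → ℝ) →ₗ[ℝ] (↥(S₂ᶜ) → ℝ) :=
    { toFun := fun c r => bA.repr (xOf c) r.val
      map_add' := fun c d => by
        funext r; show bA.repr (xOf (c + d)) r.val = _
        rw [xOf_add, map_add]; rfl
      map_smul' := fun a c => by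
        funext r; show bA.repr (xOf (a • c)) r.val = _
        rw [xOf_smul, _root_.map_smul]; rfl }
  have hψnotinj : ¬ Function.Injective ψ := by
    intro hinj
    have hle := LinearMap.finrank_le_finrank_of_injective hinj
    rw [Module.finrank_pi, Module.finrank_pi] at hle
    rw [Fintype.card_coe, Fintype.card_coe] at hle
    rw [hcardS₁, Finset.card_compl, hcardS₂, Fintype.card_fin] at hle
    have := u.isLt
    omega
  rw [Function.not_injective_iff] at hψnotinj
  obtain ⟨c₁, c₂, hceq, hcne⟩ := hψnotinj
  set c := c₁ - c₂ with hcdef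
  have hc : c ≠ 0 := sub_ne_zero.mpr hcne
  have hψc : ψ c = 0 := by rw [map_sub, hceq, sub_self]
  set cf : Fin k → ℝ := extMap S₁ c with hcf
  set x : EuclideanSpace ℝ (Fin k) := ∑ t, cf t • bB t with hx
  have hxeq : xOf c = x := rfl
  have hreprA0 : ∀ t, t ∉ S₂ → bA.repr x t = 0 := by
    intro t ht
    have : ψ c ⟨t, Finset.mem_compl.mpr ht⟩ = 0 := by rw [hψc]; rfl
    exact this
  have hN : x ⬝ᵥ x = ∑ t, (cf t)^2 := combo_dot_self bB cf
  have hNA : x ⬝ᵥ x = ∑ t, (bA.repr x t)^2 := by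
    have := combo_dot_self bA (fun t => bA.repr x t)
    rwa [bA.sum_repr x] at this
  have hQB : x ⬝ᵥ (B *ᵥ x) = ∑ t, μB t * (cf t)^2 := quad_combo hB cf
  have hQA : x ⬝ᵥ (A *ᵥ x) = ∑ t, μA t * (bA.repr x t)^2 := by
    have := quad_combo hA (fun t => bA.repr x t)
    rwa [bA.sum_repr x] at this
  have hcfS : ∀ t, t ∉ S₁ → cf t = 0 := by
    intro t ht
    simp only [hcf, extMap, LinearMap.coe_mk, AddHom.coe_mk, dif_neg ht]
  have hgB : ∀ t ∈ S₁, gB ≤ μB t := by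
    intro t ht
    rw [hS₁, Finset.mem_image] at ht
    obtain ⟨r, hr, hrt⟩ := ht
    rw [Finset.mem_Ici] at hr
    rw [← hrt]
    exact Tuple.monotone_sort hB.eigenvalues hr
  have hgA : ∀ t ∈ S₂, μA t ≤ gA := by
    intro t ht
    rw [hS₂, Finset.mem_image] at ht
    obtain ⟨r, hr, hrt⟩ := ht
    rw [Finset.mem_Iic] at hr
    rw [← hrt]
    exact Tuple.monotone_sort hA.eigenvalues hr
  have hlowB : gB * (x ⬝ᵥ x) ≤ x ⬝ᵥ (B *ᵥ x) := by
    rw [hQB, hN, Finset.mul_sum]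
    refine Finset.sum_le_sum fun t _ => ?_
    by_cases ht : t ∈ S₁
    · exact mul_le_mul_of_nonneg_right (hgB t ht) (sq_nonneg _)
    · rw [hcfS t ht]; simp
  have hupA : x ⬝ᵥ (A *ᵥ x) ≤ gA * (x ⬝ᵥ x) := by
    rw [hQA, hNA, Finset.mul_sum]
    refine Finset.sum_le_sum fun t _ => ?_
    by_cases ht : t ∈ S₂
    · exact mul_le_mul_of_nonneg_right (hgA t ht) (sq_nonneg _)
    · rw [hreprA0 t ht]; simp
  have hE : x ⬝ᵥ ((B - A) *ᵥ x) ≤ frobNorm (B - A) * (x ⬝ᵥ x) := quadE_le _ _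
  have hsplit : x ⬝ᵥ (B *ᵥ x) = x ⬝ᵥ (A *ᵥ x) + x ⬝ᵥ ((B - A) *ᵥ x) := by
    rw [← dotProduct_add, ← Matrix.add_mulVec, add_sub_cancel]
  have hNpos : 0 < x ⬝ᵥ x := by
    rw [hN]
    obtain ⟨s, hcs⟩ := Function.ne_iff.mp hc
    refine Finset.sum_pos' (fun t _ => sq_nonneg _) ⟨s.val, Finset.mem_univ _, ?_⟩
    have hcfs : cf s.val = c s := by
      simp only [hcf, extMap, LinearMap.coe_mk, AddHom.coe_mk, dif_pos s.prop]
    rw [hcfs]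
    have : c s ≠ 0 := hcs
    positivity
  have final : gB * (x ⬝ᵥ x) ≤ (gA + frobNorm (B - A)) * (x ⬝ᵥ x) := by
    rw [add_mul]
    calc gB * (x ⬝ᵥ x) ≤ x ⬝ᵥ (B *ᵥ x) := hlowB
      _ = x ⬝ᵥ (A *ᵥ x) + x ⬝ᵥ ((B - A) *ᵥ x) := hsplit
      _ ≤ gA * (x ⬝ᵥ x) + frobNorm (B - A) * (x ⬝ᵥ x) := add_le_add hupA hE
  exact le_of_mul_le_mul_right (by rwa [mul_comm gB, mul_comm] at final) hNpos

end weyl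

theorem eigDesc_sub_abs_le {k : ℕ} {A B : Matrix (Fin k) (Fin k) ℝ}
    (hA : A.IsHermitian) (hB : B.IsHermitian) (i : ℕ) (hik : i - 1 < k) :
    |eigDesc B i - eigDesc A i| ≤ frobNorm (B - A) := by
  have hBd : eigDesc B i
      = hB.eigenvalues (Tuple.sort hB.eigenvalues (Fin.rev ⟨i - 1, hik⟩)) := by
    rw [eigDesc, dif_pos ⟨hB, hik⟩]
  have hAd : eigDesc A i
      = hA.eigenvalues (Tuple.sort hA.eigenvalues (Fin.rev ⟨i - 1, hik⟩)) := by
    rw [eigDesc, dif_pos ⟨hA, hik⟩]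
  rw [abs_sub_le_iff, hBd, hAd]
  constructor
  · have := weyl_sorted A B hA hB (Fin.rev ⟨i - 1, hik⟩)
    linarith
  · have := weyl_sorted B A hB hA (Fin.rev ⟨i - 1, hik⟩)
    rw [← frobNorm_sub_comm A B]
    linarith

lemma sHat_mono {a b : ℝ} (ha : 0 ≤ a) (hab : a ≤ b) :
    a / (1 + a) ≤ b / (1 + b) := by
  rw [div_le_div_iff₀ (by linarith) (by linarith)]
  nlinarith

set_option maxHeartbeats 1000000 in
lemma det_core (q : ℕ) (hq : 1 ≤ q) (Pn : ℕ) (hP : q + 2 ≤ Pn)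
    (lam : ℕ → ℝ) (hlamq : 0 < lam q) (hdecq : ∀ j, 1 ≤ j → j ≤ q → lam q ≤ lam j)
    (τ : ℝ) (hτ0 : 0 < τ) (hτ1 : τ < 1)
    (c1 c2 δ : ℝ) (hc1 : 0 < c1) (hc2 : 0 < c2) (hδ0 : 0 ≤ δ)
    (hδ1 : δ ≤ lam q / 2) (hδ2 : δ ≤ 1/2)
    (h4a : 4*δ^2 ≤ c1 * c2)
    (h4b : 4*δ^2 * 4 ≤ c1 * c2 * (1 - τ))
    (hC3 : 4*δ^2 + c1 ≤ ((lam q / 2) / (1 + lam q / 2))^2 / 2)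
    (hC4 : c2 ≤ τ/2)
    (lamhat : ℕ → ℝ)
    (hclose : ∀ j, 1 ≤ j → j ≤ q → |lamhat j - lam j| ≤ δ)
    (hsmall : ∀ j, q < j → j ≤ Pn → |lamhat j| ≤ δ) :
    {j | 1 ≤ j ∧ j ≤ Pn - 2 ∧ rRatio lamhat c1 c2 j ≤ τ}.Nonempty ∧
    sSup {j | 1 ≤ j ∧ j ≤ Pn - 2 ∧ rRatio lamhat c1 c2 j ≤ τ} = q := by
  set m0 : ℝ := (lam q / 2) / (1 + lam q / 2) with hm0
  have hm0pos : 0 < m0 := by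
    apply div_pos <;> linarith
  -- sHat lower bound for top eigenvalues
  have hs_top : ∀ j, 1 ≤ j → j ≤ q → m0 ≤ sHat lamhat j := by
    intro j hj1 hjq
    have h1 : |lamhat j - lam j| ≤ δ := hclose j hj1 hjq
    have h2 : lam q ≤ lam j := hdecq j hj1 hjq
    have h3 : lam q / 2 ≤ lamhat j := by
      rw [abs_le] at h1; linarith
    rw [sHat, hm0]
    exact sHat_mono (by linarith) h3
  -- sHat square bound for small eigenvalues
  have hs_small : ∀ j, q < j → j ≤ Pn → (sHat lamhat j)^2 ≤ 4*δ^2 := by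
    intro j hjq hjP
    have h1 : |lamhat j| ≤ δ := hsmall j hjq hjP
    have h1' := abs_le.mp h1
    have h2 : (1:ℝ)/2 ≤ 1 + lamhat j := by linarith [h1'.1]
    have h3 : |sHat lamhat j| ≤ 2*δ := by
      rw [sHat, abs_div, abs_of_pos (by linarith : (0:ℝ) < 1 + lamhat j)]
      rw [div_le_iff₀ (by linarith : (0:ℝ) < 1 + lamhat j)]
      nlinarith [h1, abs_nonneg (lamhat j)]
    calc (sHat lamhat j)^2 = |sHat lamhat j|^2 := (sq_abs _).symm
      _ ≤ (2*δ)^2 := pow_le_pow_left₀ (abs_nonneg _) h3 2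
      _ = 4*δ^2 := by ring
  -- sStar small for j > q
  have hstar_small : ∀ j, q < j → j + 1 ≤ Pn → |sStar lamhat c1 j| ≤ 4*δ^2/c1 := by
    intro j hjq hjP
    have ha : (sHat lamhat j)^2 ≤ 4*δ^2 := hs_small j hjq (by omega)
    have hb : (sHat lamhat (j+1))^2 ≤ 4*δ^2 := hs_small (j+1) (by omega) hjP
    have hbpos : (0:ℝ) < (sHat lamhat (j+1))^2 + c1 := by positivity
    have heq : sStar lamhat c1 j
        = ((sHat lamhat j)^2 - (sHat lamhat (j+1))^2) / ((sHat lamhat (j+1))^2 + c1) := by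
      rw [sStar]
      field_simp
      ring
    rw [heq, abs_div, abs_of_pos hbpos]
    have hnum : |(sHat lamhat j)^2 - (sHat lamhat (j+1))^2| ≤ 4*δ^2 := by
      rw [abs_sub_le_iff]
      constructor <;> nlinarith [sq_nonneg (sHat lamhat j), sq_nonneg (sHat lamhat (j+1))]
    have hden : c1 ≤ (sHat lamhat (j+1))^2 + c1 := by nlinarith [sq_nonneg (sHat lamhat (j+1))]
    exact div_le_div₀ (by positivity) hnum hc1 hden
  -- sStar at q is at least 1
  have hstar_q : 1 ≤ sStar lamhat c1 q := by
    have ha : m0 ≤ sHat lamhat q := hs_top q hq le_rfl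
    have hb : (sHat lamhat (q+1))^2 ≤ 4*δ^2 := hs_small (q+1) (by omega) (by omega)
    have hbpos : (0:ℝ) < (sHat lamhat (q+1))^2 + c1 := by positivity
    have hm0sq : m0^2 ≤ (sHat lamhat q)^2 := by nlinarith
    rw [sStar, le_sub_iff_add_le, le_div_iff₀ hbpos]
    linarith [hm0sq, hb, hC3, hc1]
  -- q is in the set
  have hrq : rRatio lamhat c1 c2 q ≤ τ := by
    have hden : 1 + c2 ≤ sStar lamhat c1 q + c2 := by linarith
    have hdenpos : (0:ℝ) < sStar lamhat c1 q + c2 := by linarith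
    have hnum : sStar lamhat c1 (q+1) + c2 ≤ 2*c2 := by
      have := hstar_small (q+1) (by omega) (by omega)
      rw [abs_le] at this
      have h2 : 4*δ^2/c1 ≤ c2 := by
        rw [div_le_iff₀ hc1]
        linarith [h4a, mul_comm c2 c1]
      linarith [this.2]
    rw [rRatio, div_le_iff₀ hdenpos]
    nlinarith [mul_le_mul_of_nonneg_left hden hτ0.le]
  have hqmem : q ∈ {j | 1 ≤ j ∧ j ≤ Pn - 2 ∧ rRatio lamhat c1 c2 j ≤ τ} := by
    refine ⟨hq, by omega, hrq⟩
  -- no j > q in the set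
  have hnotmem : ∀ j, q < j → j ≤ Pn - 2 → τ < rRatio lamhat c1 c2 j := by
    intro j hjq hjP
    have hj1 : j + 1 ≤ Pn := by omega
    have hj2 : j + 2 ≤ Pn := by omega
    have hsj := hstar_small j hjq hj1
    have hsj1 := hstar_small (j+1) (by omega) (by omega)
    rw [abs_le] at hsj hsj1
    have hηle : 4*δ^2/c1 ≤ c2 * (1-τ) / 4 := by
      rw [div_le_div_iff₀ hc1 (by norm_num : (0:ℝ) < 4)]
      nlinarith
    have hηnn : (0:ℝ) ≤ 4*δ^2/c1 := by positivity
    have hdenpos : (0:ℝ) < sStar lamhat c1 j + c2 := by nlinarith [hsj.1, hηle]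
    rw [rRatio, lt_div_iff₀ hdenpos]
    have hkey : τ * (4*δ^2/c1 + c2) < -(4*δ^2/c1) + c2 := by
      nlinarith [mul_le_mul_of_nonneg_right hηle (show (0:ℝ) ≤ 1+τ by linarith),
        mul_pos (mul_pos hc2 (show (0:ℝ) < 1-τ by linarith)) (show (0:ℝ) < 3-τ by linarith)]
    have h3 : τ * (sStar lamhat c1 j + c2) ≤ τ * (4*δ^2/c1 + c2) := by
      apply mul_le_mul_of_nonneg_left _ hτ0.le
      linarith [hsj.2]
    linarith [hsj1.1]
  refine ⟨⟨q, hqmem⟩, ?_⟩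
  have hub : ∀ j ∈ {j | 1 ≤ j ∧ j ≤ Pn - 2 ∧ rRatio lamhat c1 c2 j ≤ τ}, j ≤ q := by
    intro j hj
    by_contra hcon
    push_neg at hcon
    exact absurd hj.2.2 (not_le.mpr (hnotmem j hcon hj.2.1))
  exact le_antisymm (csSup_le ⟨q, hqmem⟩ hub) (le_csSup ⟨q, hub⟩ hqmem)


/-- Consistency of the TDRR estimate with a divergent number of covariates
`p n ≤ C₀·n^α`, `0 ≤ α < 1`: if for each `n` the random symmetric `p n × p n` matrix
`Mn n` converges to a positive semidefinite matrix `Mlim n` whose nonzero eigenvalues are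
exactly `λ_1 ≥ ... ≥ λ_q > 0` (the same for all `n`) at rate `O_p((p n / n)^{1/2})` in
Frobenius norm, the ridges satisfy `c₁(n) → 0`, `c₂(n) → 0`, `n·c₁(n)·c₂(n)/p n → ∞`,
and `τ ∈ (0,1)`, then with probability tending to one the set
`S_n = {j ∈ {1, ..., p n − 2} : r_j(n) ≤ τ}` is nonempty with maximum `q`. -/
theorem tdrr_consistent_divergent_p (Ω : Type*) [MeasurableSpace Ω]
    (P : Measure Ω) [IsProbabilityMeasure P]
    (q : ℕ) (hq : 1 ≤ q)
    (p : ℕ → ℕ) (hp : ∀ n, q + 2 ≤ p n)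
    (C₀ α : ℝ) (hα0 : 0 ≤ α) (hα1 : α < 1)
    (hpgrowth : ∀ n : ℕ, 1 ≤ n → (p n : ℝ) ≤ C₀ * (n : ℝ) ^ α)
    (lam : ℕ → ℝ)
    (hdec : ∀ i j, 1 ≤ i → i ≤ j → j ≤ q → lam j ≤ lam i)
    (hpos : 0 < lam q)
    (Mlim : (n : ℕ) → Matrix (Fin (p n)) (Fin (p n)) ℝ)
    (hMlim : ∀ n, (Mlim n).PosSemidef)
    (heig : ∀ n j, 1 ≤ j → j ≤ q → eigDesc (Mlim n) j = lam j)
    (heigzero : ∀ n j, q < j → j ≤ p n → eigDesc (Mlim n) j = 0)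
    (Mn : (n : ℕ) → Ω → Matrix (Fin (p n)) (Fin (p n)) ℝ)
    (hmeas : ∀ n i j, Measurable (fun ω => Mn n ω i j))
    (hherm : ∀ n ω, (Mn n ω).IsHermitian)
    (hOp : ∀ ε : ℝ≥0∞, 0 < ε → ∃ C : ℝ, 0 < C ∧ ∀ n : ℕ, 1 ≤ n →
      P {ω | C * Real.sqrt ((p n : ℝ) / n) < frobNorm (Mn n ω - Mlim n)} ≤ ε)
    (c1 c2 : ℕ → ℝ) (hc1pos : ∀ n, 0 < c1 n) (hc2pos : ∀ n, 0 < c2 n)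
    (hc1 : Tendsto c1 atTop (nhds 0)) (hc2 : Tendsto c2 atTop (nhds 0))
    (hncc : Tendsto (fun n : ℕ => (n : ℝ) * c1 n * c2 n / (p n : ℝ)) atTop atTop)
    (τ : ℝ) (hτ0 : 0 < τ) (hτ1 : τ < 1) :
    Tendsto (fun n => P {ω |
        {j | 1 ≤ j ∧ j ≤ p n - 2 ∧
          rRatio (fun i => eigDesc (Mn n ω) i) (c1 n) (c2 n) j ≤ τ}.Nonempty ∧
        sSup {j | 1 ≤ j ∧ j ≤ p n - 2 ∧
          rRatio (fun i => eigDesc (Mn n ω) i) (c1 n) (c2 n) j ≤ τ} = q})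
      atTop (nhds 1) := by
  have hp3 : ∀ n, 3 ≤ p n := fun n => le_trans (by omega) (hp n)
  have hC₀pos : (0:ℝ) < C₀ := by
    have h1 := hpgrowth 1 le_rfl
    rw [Nat.cast_one, Real.one_rpow, mul_one] at h1
    have h2 : (3:ℝ) ≤ (p 1 : ℝ) := by exact_mod_cast hp3 1
    linarith
  -- p n / n → 0
  have hpn0 : Tendsto (fun n : ℕ => (p n : ℝ) / n) atTop (nhds 0) := by
    have hg : Tendsto (fun n : ℕ => C₀ * (n:ℝ) ^ (-(1 - α))) atTop (nhds 0) := by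
      have := (tendsto_rpow_neg_atTop (by linarith : (0:ℝ) < 1 - α)).comp
        (tendsto_natCast_atTop_atTop (R := ℝ))
      simpa using this.const_mul C₀
    apply squeeze_zero' (t₀ := atTop) (f := fun n : ℕ => (p n : ℝ) / n)
      (g := fun n : ℕ => C₀ * (n:ℝ) ^ (-(1 - α)))
    · filter_upwards [eventually_ge_atTop 1] with n hn
      positivity
    · filter_upwards [eventually_ge_atTop 1] with n hn
      have hnpos : (0:ℝ) < n := by exact_mod_cast hn
      have h1 : (n:ℝ) ^ (-(1 - α)) = (n:ℝ) ^ α / n := by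
        rw [show -(1 - α) = α - 1 by ring, Real.rpow_sub hnpos, Real.rpow_one]
      rw [h1, ← mul_div_assoc]
      gcongr
      exact hpgrowth n hn
    · exact hg
  rw [ENNReal.tendsto_nhds ENNReal.one_ne_top]
  intro ε hε
  obtain ⟨C, hCpos, hC⟩ := hOp ε hε
  set δ : ℕ → ℝ := fun n => C * Real.sqrt ((p n : ℝ)/n) with hδdef
  have hδ0 : ∀ n, 0 ≤ δ n := fun n => mul_nonneg hCpos.le (Real.sqrt_nonneg _)
  have hδtend : Tendsto δ atTop (nhds 0) := by
    have h1 : Tendsto (fun n : ℕ => Real.sqrt ((p n:ℝ)/n)) atTop (nhds 0) := by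
      have h0 := (Real.continuous_sqrt.tendsto 0).comp hpn0
      rw [Real.sqrt_zero] at h0
      exact h0
    have h2 := h1.const_mul C
    rw [mul_zero] at h2
    exact h2
  have hδsq : ∀ n : ℕ, 1 ≤ n → (δ n)^2 = C^2 * ((p n : ℝ)/n) := by
    intro n hn
    have hnn : (0:ℝ) ≤ (p n : ℝ)/n := by positivity
    rw [hδdef, mul_pow, Real.sq_sqrt hnn]
  set m0 : ℝ := (lam q / 2) / (1 + lam q / 2) with hm0
  have hm0pos : 0 < m0 := div_pos (by linarith) (by linarith)
  have ev1 : ∀ᶠ n : ℕ in atTop, δ n ≤ lam q / 2 :=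
    hδtend.eventually (eventually_le_nhds (by linarith))
  have ev2 : ∀ᶠ n : ℕ in atTop, δ n ≤ 1/2 :=
    hδtend.eventually (eventually_le_nhds (by norm_num))
  have ev3 : ∀ᶠ n : ℕ in atTop, 4*(δ n)^2 + c1 n ≤ m0^2/2 := by
    have h2 : Tendsto (fun n => (δ n)^2) atTop (nhds 0) := by
      have := hδtend.mul hδtend
      simpa [sq] using this
    have ht : Tendsto (fun n => 4*(δ n)^2 + c1 n) atTop (nhds 0) := by
      simpa using (h2.const_mul 4).add hc1
    exact ht.eventually (eventually_le_nhds (by positivity))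
  have ev4 : ∀ᶠ n : ℕ in atTop, c2 n ≤ τ/2 :=
    hc2.eventually (eventually_le_nhds (by linarith))
  have ev5a : ∀ᶠ n : ℕ in atTop, 4*C^2 ≤ (n:ℝ) * c1 n * c2 n / p n :=
    hncc.eventually_ge_atTop _
  have ev5b : ∀ᶠ n : ℕ in atTop, 16*C^2/(1-τ) ≤ (n:ℝ) * c1 n * c2 n / p n :=
    hncc.eventually_ge_atTop _
  filter_upwards [ev1, ev2, ev3, ev4, ev5a, ev5b, eventually_ge_atTop 1]
    with n h1 h2 h3 h4 h5a h5b hn1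
  refine Set.mem_Icc.mpr ⟨?_, le_trans prob_le_one le_self_add⟩
  -- lower bound
  have hnpos : (0:ℝ) < n := by exact_mod_cast hn1
  have hppos : (0:ℝ) < p n := by
    have := hp3 n
    exact_mod_cast by omega
  set R : ℝ := (n:ℝ) * c1 n * c2 n / p n with hR
  have hRc : c1 n * c2 n = R * ((p n:ℝ)/n) := by
    rw [hR]
    field_simp
  have hpn_nn : (0:ℝ) ≤ (p n : ℝ)/n := by positivity
  have h4a : 4*(δ n)^2 ≤ c1 n * c2 n := by
    rw [hδsq n hn1, hRc, ← mul_assoc]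
    exact mul_le_mul_of_nonneg_right (by linarith) hpn_nn
  have h4b : 4*(δ n)^2 * 4 ≤ c1 n * c2 n * (1 - τ) := by
    have h16 : 16*C^2 ≤ R * (1-τ) := by
      rw [div_le_iff₀ (by linarith : (0:ℝ) < 1-τ)] at h5b
      linarith
    rw [hδsq n hn1, hRc]
    calc 4*(C^2 * ((p n:ℝ)/n)) * 4 = (16*C^2) * ((p n:ℝ)/n) := by ring
      _ ≤ (R * (1-τ)) * ((p n:ℝ)/n) := mul_le_mul_of_nonneg_right h16 hpn_nn
      _ = R * ((p n:ℝ)/n) * (1-τ) := by ring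
  set bad : Set Ω := {ω | C * Real.sqrt ((p n : ℝ)/n) < frobNorm (Mn n ω - Mlim n)} with hbaddef
  have hbad : P bad ≤ ε := hC n hn1
  set good : Set Ω := {ω |
      {j | 1 ≤ j ∧ j ≤ p n - 2 ∧
        rRatio (fun i => eigDesc (Mn n ω) i) (c1 n) (c2 n) j ≤ τ}.Nonempty ∧
      sSup {j | 1 ≤ j ∧ j ≤ p n - 2 ∧
        rRatio (fun i => eigDesc (Mn n ω) i) (c1 n) (c2 n) j ≤ τ} = q} with hgooddef
  have hsub : badᶜ ⊆ good := by
    intro ω hω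
    simp only [hbaddef, Set.mem_compl_iff, Set.mem_setOf_eq, not_lt] at hω
    have hkey : ∀ j, 1 ≤ j → j ≤ p n →
        |eigDesc (Mn n ω) j - eigDesc (Mlim n) j| ≤ δ n := by
      intro j hj1 hjp
      have hjk : j - 1 < p n := by omega
      exact le_trans (eigDesc_sub_abs_le (hMlim n).1 (hherm n ω) j hjk) hω
    have hclose : ∀ j, 1 ≤ j → j ≤ q →
        |(fun i => eigDesc (Mn n ω) i) j - lam j| ≤ δ n := by
      intro j hj1 hjq
      rw [← heig n j hj1 hjq]
      exact hkey j hj1 (by have := hp n; omega)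
    have hsmall : ∀ j, q < j → j ≤ p n →
        |(fun i => eigDesc (Mn n ω) i) j| ≤ δ n := by
      intro j hjq hjp
      have := hkey j (by omega) hjp
      rw [heigzero n j hjq hjp, sub_zero] at this
      exact this
    exact det_core q hq (p n) (hp n) lam hpos
      (fun j hj1 hjq => hdec j q hj1 hjq le_rfl) τ hτ0 hτ1
      (c1 n) (c2 n) (δ n) (hc1pos n) (hc2pos n) (hδ0 n) h1 h2 h4a h4b h3 h4
      (fun i => eigDesc (Mn n ω) i) hclose hsmall
  have h1le : (1:ℝ≥0∞) ≤ P good + ε := by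
    calc (1:ℝ≥0∞) = P Set.univ := measure_univ.symm
      _ = P (badᶜ ∪ bad) := by rw [Set.compl_union_self]
      _ ≤ P badᶜ + P bad := measure_union_le _ _
      _ ≤ P good + ε := add_le_add (measure_mono hsub) hbad
  exact tsub_le_iff_right.mpr h1le
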